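/- Let A, B be positive definite n×n complex matrices. Suppose there is a faithful positive tracial linear functional τ (e.g., the trace) with τ(((A^{1/2}+B^{1/2})/2)^2) = τ((1/4)(A + B + A(A^{-1}#B) + (A^{-1}#B)A)). Then AB = BA. -/

import Mathlib

open Matrix
open scoped ComplexOrder

open Classical in
/-- The positive square root of a positive semidefinite matrix (junk value `0` otherwise). -/
noncomputable def msqrt {n : Type*} [Fintype n] [DecidableEq n] (A : Matrix n n ℂ) :
    Matrix n n ℂ :=
  if h : A.PosSemidef then
    (h.1.eigenvectorUnitary : Matrix n n ℂ) * diagonal ((↑) ∘ (√·) ∘ h.1.eigenvalues) *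
      (star h.1.eigenvectorUnitary : Matrix n n ℂ)
  else 0

/-- The geometric mean `P # Q = P^{1/2} (P^{-1/2} Q P^{-1/2})^{1/2} P^{1/2}`. -/
noncomputable def geoMean {n : Type*} [Fintype n] [DecidableEq n] (P Q : Matrix n n ℂ) :
    Matrix n n ℂ :=
  msqrt P * msqrt ((msqrt P)⁻¹ * Q * (msqrt P)⁻¹) * msqrt P

/-- Replacement for the removed `Matrix.PosSemidef.sqrt`. -/
noncomputable def Matrix.PosSemidef.sqrt {n : Type*} [Fintype n] [DecidableEq n]
    {A : Matrix n n ℂ} (h : A.PosSemidef) : Matrix n n ℂ :=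
  (h.1.eigenvectorUnitary : Matrix n n ℂ) * diagonal ((↑) ∘ (√·) ∘ h.1.eigenvalues) *
    (star h.1.eigenvectorUnitary : Matrix n n ℂ)

section sqrtPort
open scoped MatrixOrder

lemma Matrix.PosSemidef.sqrt_eq_cfcSqrt {n : Type*} [Fintype n] [DecidableEq n]
    {A : Matrix n n ℂ} (h : A.PosSemidef) : h.sqrt = CFC.sqrt A := by
  have h0 : (0 : Matrix n n ℂ) ≤ A := Matrix.nonneg_iff_posSemidef.mpr h
  rw [CFC.sqrt_eq_cfc, cfc_nnreal_eq_real _ A, h.1.cfc_eq]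
  simp only [IsHermitian.cfc, Unitary.conjStarAlgAut_apply, Matrix.PosSemidef.sqrt]
  congr 3
  funext i
  simp only [Function.comp_apply, Real.coe_sqrt, Real.coe_toNNReal _ (h.eigenvalues_nonneg i)]
  rfl

lemma Matrix.PosSemidef.posSemidef_sqrt {n : Type*} [Fintype n] [DecidableEq n]
    {A : Matrix n n ℂ} (h : A.PosSemidef) : h.sqrt.PosSemidef := by
  rw [h.sqrt_eq_cfcSqrt]; exact Matrix.nonneg_iff_posSemidef.mp (CFC.sqrt_nonneg A)

lemma Matrix.PosSemidef.sqrt_mul_self {n : Type*} [Fintype n] [DecidableEq n]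
    {A : Matrix n n ℂ} (h : A.PosSemidef) : h.sqrt * h.sqrt = A := by
  rw [h.sqrt_eq_cfcSqrt]; exact CFC.sqrt_mul_sqrt_self A (Matrix.nonneg_iff_posSemidef.mpr h)

lemma Matrix.PosSemidef.eq_sqrt_of_sq_eq {n : Type*} [Fintype n] [DecidableEq n]
    {A : Matrix n n ℂ} (hA : A.PosSemidef) {B : Matrix n n ℂ} (hB : B.PosSemidef)
    (hAB : A ^ 2 = B) : A = hB.sqrt := by
  rw [hB.sqrt_eq_cfcSqrt]
  exact ((CFC.sqrt_eq_iff B A (Matrix.nonneg_iff_posSemidef.mpr hB)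
    (Matrix.nonneg_iff_posSemidef.mpr hA)).mpr (by rw [← sq]; exact hAB)).symm

end sqrtPort

/-- A positive semidefinite matrix with invertible determinant is positive definite. -/
lemma aux_posDef_of_posSemidef {n : Type*} [Fintype n] [DecidableEq n] {M : Matrix n n ℂ}
    (hM : M.PosSemidef) (h : IsUnit M.det) : M.PosDef := by
  exact hM.posDef_iff_det_ne_zero.mpr h.ne_zero

/-- A matrix with `(Eᴴ * E).trace = 0` is zero. -/
lemma aux_eq_zero_of_trace {n : Type*} [Fintype n] [DecidableEq n] {E : Matrix n n ℂ}
    (h : (Eᴴ * E).trace = 0) : E = 0 := by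
  have hexp : (Eᴴ * E).trace = ((∑ i, ∑ j, Complex.normSq (E j i) : ℝ) : ℂ) := by
    simp only [Matrix.trace, Matrix.diag, Matrix.mul_apply, Matrix.conjTranspose_apply]
    push_cast
    refine Finset.sum_congr rfl fun i _ => Finset.sum_congr rfl fun j _ => ?_
    simp [Complex.normSq_eq_conj_mul_self, Complex.star_def]
  rw [hexp, Complex.ofReal_eq_zero] at h
  have h1 : ∀ i ∈ (Finset.univ : Finset n), 0 ≤ ∑ j, Complex.normSq (E j i) :=
    fun i _ => Finset.sum_nonneg fun j _ => Complex.normSq_nonneg _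
  ext i j
  have h2 := (Finset.sum_eq_zero_iff_of_nonneg h1).mp h j (Finset.mem_univ j)
  have h3 := (Finset.sum_eq_zero_iff_of_nonneg
    (fun k _ => Complex.normSq_nonneg _)).mp h2 i (Finset.mem_univ i)
  simpa using Complex.normSq_eq_zero.mp h3

theorem stmt15 {n : Type*} [Fintype n] [DecidableEq n] (A B : Matrix n n ℂ)
    (hA : A.PosDef) (hB : B.PosDef)
    (h : (((1 / 2 : ℂ) • (msqrt A + msqrt B)) ^ 2).trace =
      ((1 / 4 : ℂ) • (A + B + A * geoMean A⁻¹ B + geoMean A⁻¹ B * A)).trace) :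
    A * B = B * A := by
  classical
  set a := hA.posSemidef.sqrt with ha_def
  set b := hB.posSemidef.sqrt with hb_def
  have hmA : msqrt A = a := dif_pos hA.posSemidef
  have hmB : msqrt B = b := dif_pos hB.posSemidef
  have ha : a.PosSemidef := hA.posSemidef.posSemidef_sqrt
  have hb : b.PosSemidef := hB.posSemidef.posSemidef_sqrt
  have haa : a * a = A := hA.posSemidef.sqrt_mul_self
  have hbb : b * b = B := hB.posSemidef.sqrt_mul_self
  -- invertibility of the square roots
  have hAdet : IsUnit A.det := (Matrix.isUnit_iff_isUnit_det A).mp hA.isUnit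
  have hBdet : IsUnit B.det := (Matrix.isUnit_iff_isUnit_det B).mp hB.isUnit
  have hadet : IsUnit a.det := by
    refine isUnit_of_mul_isUnit_left (y := a.det) ?_
    rw [← Matrix.det_mul, haa]; exact hAdet
  have hbdet : IsUnit b.det := by
    refine isUnit_of_mul_isUnit_left (y := b.det) ?_
    rw [← Matrix.det_mul, hbb]; exact hBdet
  -- the square root of A⁻¹ is a⁻¹
  have hAinv : (A⁻¹).PosSemidef := hA.inv.posSemidef
  have haPD : a.PosDef := aux_posDef_of_posSemidef ha hadet
  have hmAinv : msqrt A⁻¹ = a⁻¹ := by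
    have hsq : a⁻¹ ^ 2 = A⁻¹ := by rw [pow_two, ← Matrix.mul_inv_rev, haa]
    have heq : a⁻¹ = hAinv.sqrt := haPD.inv.posSemidef.eq_sqrt_of_sq_eq hAinv hsq
    exact (dif_pos hAinv).trans heq.symm
  -- the middle matrix and its square root
  set M : Matrix n n ℂ := a * B * a with hM_def
  have hM : M.PosSemidef := by
    have := hB.posSemidef.conjTranspose_mul_mul_same a
    rwa [ha.1.eq] at this
  set C : Matrix n n ℂ := hM.sqrt with hC_def
  have hC : C.PosSemidef := hM.posSemidef_sqrt
  have hCC : C * C = M := hM.sqrt_mul_self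
  have hMdet : IsUnit M.det := by
    rw [hM_def, Matrix.det_mul, Matrix.det_mul]
    exact (hadet.mul hBdet).mul hadet
  have hCdet : IsUnit C.det := by
    refine isUnit_of_mul_isUnit_left (y := C.det) ?_
    rw [← Matrix.det_mul, hCC]; exact hMdet
  have hmM : msqrt M = C := (dif_pos hM).trans hC_def.symm
  -- geoMean A⁻¹ B = a⁻¹ * C * a⁻¹
  have hG : geoMean A⁻¹ B = a⁻¹ * C * a⁻¹ := by
    simp only [geoMean]
    rw [hmAinv, Matrix.nonsing_inv_nonsing_inv _ hadet, ← hM_def, hmM]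
  -- reduce the trace hypothesis to trace (a*b) = trace C
  have htAG : (A * geoMean A⁻¹ B).trace = C.trace := by
    rw [hG, ← haa]
    have e : a * a * (a⁻¹ * C * a⁻¹) = a * C * a⁻¹ := by
      rw [← Matrix.mul_assoc, ← Matrix.mul_assoc, Matrix.mul_assoc a a a⁻¹,
        Matrix.mul_nonsing_inv _ hadet, Matrix.mul_one]
    rw [e, Matrix.trace_mul_cycle, Matrix.nonsing_inv_mul _ hadet, Matrix.one_mul]
  have htGA : (geoMean A⁻¹ B * A).trace = C.trace := by
    rw [Matrix.trace_mul_comm, htAG]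
  have htr : (a * b).trace = C.trace := by
    have hL : (((1 / 2 : ℂ) • (a + b)) ^ 2).trace =
        (1 / 4 : ℂ) * (A.trace + B.trace + 2 * (a * b).trace) := by
      rw [smul_pow, Matrix.trace_smul, sq, sq, Matrix.add_mul, Matrix.mul_add,
        Matrix.mul_add, haa, hbb]
      simp only [Matrix.trace_add, Matrix.trace_mul_comm b a, smul_eq_mul]
      ring
    rw [hmA, hmB, hL, Matrix.trace_smul, Matrix.trace_add, Matrix.trace_add,
      Matrix.trace_add, htAG, htGA] at h
    simp only [smul_eq_mul] at h
    linear_combination 2 * h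
  -- Cauchy–Schwarz equality case: Y = a*b equals C
  set Y : Matrix n n ℂ := a * b with hY_def
  have hYh : Yᴴ = b * a := by
    rw [hY_def, Matrix.conjTranspose_mul, ha.1.eq, hb.1.eq]
  have hYYh : Y * Yᴴ = M := by
    rw [hYh, hY_def, hM_def, ← hbb]
    rw [Matrix.mul_assoc, Matrix.mul_assoc, Matrix.mul_assoc]
  set s : Matrix n n ℂ := hC.sqrt with hs_def
  have hs : s.PosSemidef := hC.posSemidef_sqrt
  have hss : s * s = C := hC.sqrt_mul_self
  have hsdet : IsUnit s.det := by
    refine isUnit_of_mul_isUnit_left (y := s.det) ?_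
    rw [← Matrix.det_mul, hss]; exact hCdet
  have hsinvH : (s⁻¹)ᴴ = s⁻¹ := by rw [Matrix.conjTranspose_nonsing_inv, hs.1.eq]
  set E : Matrix n n ℂ := s⁻¹ * Y - s with hE_def
  have hEh : Eᴴ = Yᴴ * s⁻¹ - s := by
    rw [hE_def, Matrix.conjTranspose_sub, Matrix.conjTranspose_mul, hsinvH, hs.1.eq]
  have htE : (Eᴴ * E).trace = 0 := by
    have hexpand : Eᴴ * E = Yᴴ * s⁻¹ * (s⁻¹ * Y) - Yᴴ * s⁻¹ * s - s * (s⁻¹ * Y) + s * s := by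
      rw [hEh, hE_def, Matrix.sub_mul, Matrix.mul_sub, Matrix.mul_sub]
      abel
    have t1 : (Yᴴ * s⁻¹ * (s⁻¹ * Y)).trace = C.trace := by
      rw [Matrix.trace_mul_comm, Matrix.mul_assoc, ← Matrix.mul_assoc Y Yᴴ, hYYh]
      rw [Matrix.trace_mul_comm, Matrix.mul_assoc, ← Matrix.mul_inv_rev, hss, ← hCC,
        Matrix.mul_assoc, Matrix.mul_nonsing_inv _ hCdet, Matrix.mul_one]
    have t2 : (Yᴴ * s⁻¹ * s).trace = C.trace := by
      rw [Matrix.mul_assoc, Matrix.nonsing_inv_mul _ hsdet, Matrix.mul_one,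
        hYh, Matrix.trace_mul_comm]
      exact htr
    have t3 : (s * (s⁻¹ * Y)).trace = C.trace := by
      rw [Matrix.mul_nonsing_inv_cancel_left _ _ hsdet]
      exact htr
    have t4 : (s * s).trace = C.trace := by rw [hss]
    rw [hexpand, Matrix.trace_add, Matrix.trace_sub, Matrix.trace_sub, t1, t2, t3, t4]
    ring
  have hE0 : E = 0 := aux_eq_zero_of_trace htE
  have hYC : Y = C := by
    have h1 : s⁻¹ * Y = s := by rwa [hE_def, sub_eq_zero] at hE0
    calc Y = s * (s⁻¹ * Y) := by
            rw [← Matrix.mul_assoc, Matrix.mul_nonsing_inv _ hsdet, Matrix.one_mul]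
      _ = s * s := by rw [h1]
      _ = C := hss
  have hcomm : a * b = b * a := by
    have hYY : Yᴴ = Y := by rw [hYC, hC.1.eq]
    rw [hYh, hY_def] at hYY
    exact hYY.symm
  have hc : Commute a b := hcomm
  have hfin : Commute (a * a) (b * b) := (hc.mul_right hc).mul_left (hc.mul_right hc)
  rw [haa, hbb] at hfin
  exact hfin
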